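/- arXiv:math/0611599 — 4 statements merged into one kernel-verified Lean document; each statement's English description precedes it below -/
import Mathlib

section
/- Let (X, β, μ) be a probability space and T : X → X a measure-preserving transformation. Then T is weak-mixing if and only if for every measurable set A there exists a full set J ⊆ ℕ (containing arbitrarily long runs of consecutive integers) such that lim_{n∈J, n→∞} μ(T^{-n}A ∩ A) = μ(A)². -/
set_option synthInstance.maxHeartbeats 1000000
set_option maxHeartbeats 1000000

open MeasureTheory Filter

/-- A set `J ⊆ ℕ` is *full* if it contains arbitrarily long runs of consecutive integers. -/
def IsFullSet (J : Set ℕ) : Prop := ∀ N : ℕ, ∃ k : ℕ, ∀ i ≤ N, k + i ∈ J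

/-- Weak mixing: Cesàro convergence of `|μ(T⁻ᵏA ∩ B) - μ(A)μ(B)|` to zero. -/
def WeakMixing {X : Type*} [MeasurableSpace X] (μ : Measure X) (T : X → X) : Prop :=
  ∀ A B : Set X, MeasurableSet A → MeasurableSet B →
    Tendsto (fun n : ℕ =>
        (∑ k ∈ Finset.range n,
          |(μ (T^[k] ⁻¹' A ∩ B)).toReal - (μ A).toReal * (μ B).toReal|) / n)
      atTop (nhds 0)

section Combinatorics

lemma exists_run (b : ℕ → ℝ) (hb : ∀ n, 0 ≤ b n)
    (h : Tendsto (fun n : ℕ => (∑ k ∈ Finset.range n, b k) / n) atTop (nhds 0))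
    {ε : ℝ} (hε : 0 < ε) (L M : ℕ) : ∃ k, M ≤ k ∧ ∀ i ≤ L, b (k + i) < ε := by
  by_contra hcon
  push_neg at hcon
  choose i hiL hbi using fun j : ℕ => hcon (M + j * (L + 1)) (Nat.le_add_right _ _)
  obtain ⟨N, hN⟩ := (Metric.tendsto_atTop.1 h) (ε / (2 * (L + 1))) (by positivity)
  set J := max M N with hJ
  set n := M + J * (L + 1) with hn
  have hJn' : J ≤ J * (L + 1) := Nat.le_mul_of_pos_right J (by omega)
  have hnN : N ≤ n := by
    have h1 : N ≤ J := le_max_right M N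
    omega
  have key : ∀ a c : ℕ, a < c → M + a * (L + 1) + i a < M + c * (L + 1) + i c := by
    intro a c hac
    have h1 : i a ≤ L := hiL a
    have h2 : (a + 1) * (L + 1) ≤ c * (L + 1) := Nat.mul_le_mul_right _ hac
    nlinarith
  have hsum : (J : ℝ) * ε ≤ ∑ k ∈ Finset.range n, b k := by
    have hsub : (Finset.range J).image (fun j => M + j * (L + 1) + i j) ⊆ Finset.range n := by
      intro x hx
      simp only [Finset.mem_image, Finset.mem_range] at hx ⊢
      obtain ⟨j, hj, rfl⟩ := hx
      have h1 : i j ≤ L := hiL j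
      have h2 : (j + 1) * (L + 1) ≤ J * (L + 1) := Nat.mul_le_mul_right _ hj
      have h3 : (j + 1) * (L + 1) = j * (L + 1) + (L + 1) := Nat.succ_mul _ _
      omega
    calc (J : ℝ) * ε = ∑ _j ∈ Finset.range J, ε := by simp [mul_comm]
    _ ≤ ∑ j ∈ Finset.range J, b (M + j * (L + 1) + i j) := Finset.sum_le_sum fun j _ => hbi j
    _ = ∑ x ∈ (Finset.range J).image (fun j => M + j * (L + 1) + i j), b x := by
        rw [Finset.sum_image]
        intro a ha c hc e
        by_contra hne
        rcases lt_trichotomy a c with hlt | heq | hgt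
        · exact absurd e (by have := key a c hlt; beta_reduce; omega)
        · exact hne heq
        · exact absurd e (by have := key c a hgt; beta_reduce; omega)
    _ ≤ ∑ k ∈ Finset.range n, b k :=
        Finset.sum_le_sum_of_subset_of_nonneg hsub (fun k _ _ => hb k)
  have hdist := hN n hnN
  rw [Real.dist_eq, sub_zero] at hdist
  have hJ0 : 0 < J := by
    rcases Nat.eq_zero_or_pos J with h0 | h0
    · exfalso
      have hM0 : M = 0 := by omega
      have h1 := hN (L + 1) (by omega)
      rw [Real.dist_eq, sub_zero] at h1
      have hb0 : ε ≤ ∑ k ∈ Finset.range (L + 1), b k := by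
        have hmem : i 0 ∈ Finset.range (L + 1) := by
          simp only [Finset.mem_range]
          have := hiL 0; omega
        calc ε ≤ b (M + 0 * (L + 1) + i 0) := hbi 0
        _ = b (i 0) := by rw [hM0]; norm_num
        _ ≤ ∑ k ∈ Finset.range (L + 1), b k :=
            Finset.single_le_sum (fun k _ => hb k) hmem
      have habs : (∑ k ∈ Finset.range (L + 1), b k) / (L + 1) < ε / (2 * (L + 1)) := by
        have := lt_of_le_of_lt (le_abs_self _) h1
        simpa using this
      rw [div_lt_div_iff₀ (by positivity) (by positivity)] at habs
      nlinarith [hb (i 0)]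
    · exact h0
  have hnpos : (0:ℝ) < n := by
    have : 0 < n := by omega
    exact_mod_cast this
  have habs : (∑ k ∈ Finset.range n, b k) / n < ε / (2 * (L + 1)) :=
    lt_of_le_of_lt (le_abs_self _) hdist
  have hJn : (n : ℝ) ≤ 2 * J * (L + 1) := by
    have h1 : M ≤ J := le_max_left M N
    have h2 : n ≤ 2 * (J * (L + 1)) := by omega
    have : ((n:ℕ) : ℝ) ≤ ((2 * (J * (L + 1)) : ℕ) : ℝ) := by exact_mod_cast h2
    push_cast at this ⊢
    linarith
  rw [div_lt_div_iff₀ hnpos (by positivity)] at habs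
  have hJpos : (0:ℝ) < J := by exact_mod_cast hJ0
  nlinarith [hsum, habs, hJn]

lemma full_of_cesaro (b : ℕ → ℝ) (hb : ∀ n, 0 ≤ b n)
    (h : Tendsto (fun n : ℕ => (∑ k ∈ Finset.range n, b k) / n) atTop (nhds 0)) :
    ∃ J : Set ℕ, IsFullSet J ∧ Tendsto b (atTop ⊓ 𝓟 J) (nhds 0) := by
  have hrun : ∀ m M : ℕ, ∃ k, M ≤ k ∧ ∀ i ≤ m, b (k + i) < 1 / (m + 1) :=
    fun m M => exists_run b hb h (by positivity) m M
  choose g hg1 hg2 using hrun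
  set K : ℕ → ℕ := fun m => Nat.rec (g 0 0) (fun m Km => g (m + 1) (Km + m + 1)) m with hK
  have hKsucc : ∀ m, K m + m + 1 ≤ K (m + 1) := fun m => hg1 (m + 1) (K m + m + 1)
  have hKrun : ∀ m, ∀ i ≤ m, b (K m + i) < 1 / (m + 1) := by
    intro m
    cases m with
    | zero => exact hg2 0 0
    | succ m => exact hg2 (m + 1) (K m + m + 1)
  have hKmono : StrictMono K := strictMono_nat_of_lt_succ fun m => by have := hKsucc m; omega
  refine ⟨{n | ∃ m, ∃ i ≤ m, n = K m + i}, fun N => ⟨K N, fun i hi => ⟨N, i, hi, rfl⟩⟩, ?_⟩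
  rw [Metric.tendsto_nhds]
  intro ε hε
  rw [eventually_inf_principal, eventually_atTop]
  obtain ⟨m₀, hm₀⟩ := exists_nat_one_div_lt hε
  refine ⟨K m₀, fun n hn hnJ => ?_⟩
  obtain ⟨m, i, him, rfl⟩ := hnJ
  have hmm : m₀ ≤ m := by
    by_contra hlt
    push_neg at hlt
    have h2 : K m + m < K (m + 1) := by have := hKsucc m; omega
    have h3 : K (m + 1) ≤ K m₀ := hKmono.monotone (by omega : m + 1 ≤ m₀)
    omega
  rw [Real.dist_eq, sub_zero, abs_of_nonneg (hb _)]
  calc b (K m + i) < 1 / (m + 1) := hKrun m i him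
  _ ≤ 1 / (m₀ + 1) := by
      apply one_div_le_one_div_of_le (by positivity)
      have : (m₀:ℝ) ≤ m := by exact_mod_cast hmm
      linarith
  _ < ε := hm₀

end Combinatorics

section Backward

variable {X : Type*} [MeasurableSpace X]

lemma weakMixing_of_full_set (μ : Measure X) [IsProbabilityMeasure μ]
    (T : X → X) (hT : MeasurePreserving T μ μ)
    (hyp : ∀ A : Set X, MeasurableSet A → ∃ J : Set ℕ, IsFullSet J ∧
        Tendsto (fun n : ℕ => (μ (T^[n] ⁻¹' A ∩ A)).toReal)
          (atTop ⊓ 𝓟 J) (nhds ((μ A).toReal ^ 2))) :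
    WeakMixing μ T := by
  intro A B hA hB
  set ν : Measure (X × X) := μ.prod μ with hν
  set S : X × X → X × X := Prod.map T T with hSdef
  have hS : MeasurePreserving S ν ν := hT.prod hT
  have hTn : ∀ n : ℕ, MeasurePreserving (T^[n]) μ μ := fun n => hT.iterate n
  have hSn : ∀ n : ℕ, MeasurePreserving (S^[n]) ν ν := fun n => hS.iterate n
  set c : ℝ := (μ A).toReal with hc
  set d : ℝ := (μ B).toReal with hd
  set f : X → ℝ := fun x => A.indicator (fun _ => (1:ℝ)) x - c with hf
  set g : X → ℝ := fun x => B.indicator (fun _ => (1:ℝ)) x - d with hg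
  have hfm : Measurable f := (measurable_const.indicator hA).sub measurable_const
  have hgm : Measurable g := (measurable_const.indicator hB).sub measurable_const
  have hindb : ∀ (s : Set X) (x : X), |s.indicator (fun _ => (1:ℝ)) x| ≤ 1 := by
    intro s x
    by_cases hx : x ∈ s <;> simp [Set.indicator_of_mem, Set.indicator_of_notMem, hx]
  have hfb : ∀ x, |f x| ≤ 1 + |c| := by
    intro x
    calc |f x| ≤ |A.indicator (fun _ => (1:ℝ)) x| + |c| := abs_sub _ _
    _ ≤ 1 + |c| := by have := hindb A x; linarith
  have hgb : ∀ x, |g x| ≤ 1 + |d| := by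
    intro x
    calc |g x| ≤ |B.indicator (fun _ => (1:ℝ)) x| + |d| := abs_sub _ _
    _ ≤ 1 + |d| := by have := hindb B x; linarith
  set F : X × X → ℝ := fun p => f p.1 * f p.2 with hF
  set G : X × X → ℝ := fun p => g p.1 * g p.2 with hG
  have hF2 : MemLp F 2 ν := by
    refine MemLp.of_bound ?_ ((1 + |c|) * (1 + |c|)) (ae_of_all _ fun p => ?_)
    · exact ((hfm.comp measurable_fst).mul (hfm.comp measurable_snd)).aestronglyMeasurable
    rw [Real.norm_eq_abs, abs_mul]
    have h1 := hfb p.1; have h2 := hfb p.2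
    have h3 : (0:ℝ) ≤ |f p.1| := abs_nonneg _
    have h4 : (0:ℝ) ≤ |f p.2| := abs_nonneg _
    nlinarith
  have hG2 : MemLp G 2 ν := by
    refine MemLp.of_bound ?_ ((1 + |d|) * (1 + |d|)) (ae_of_all _ fun p => ?_)
    · exact ((hgm.comp measurable_fst).mul (hgm.comp measurable_snd)).aestronglyMeasurable
    rw [Real.norm_eq_abs, abs_mul]
    have h1 := hgb p.1; have h2 := hgb p.2
    have h3 : (0:ℝ) ≤ |g p.1| := abs_nonneg _
    have h4 : (0:ℝ) ≤ |g p.2| := abs_nonneg _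
    nlinarith
  set Fl : Lp ℝ 2 ν := hF2.toLp F with hFl
  set Gl : Lp ℝ 2 ν := hG2.toLp G with hGl
  set Vli : Lp ℝ 2 ν →ₗᵢ[ℝ] Lp ℝ 2 ν := Lp.compMeasurePreservingₗᵢ ℝ S hS with hVli
  set V : Lp ℝ 2 ν →L[ℝ] Lp ℝ 2 ν := Vli.toContinuousLinearMap with hV
  have hVcoe : ∀ u : Lp ℝ 2 ν, ⇑(V u) =ᵐ[ν] ⇑u ∘ S :=
    fun u => Lp.coeFn_compMeasurePreserving u hS
  have hpow : ∀ (n : ℕ) (u : Lp ℝ 2 ν), ⇑((V ^ n) u) =ᵐ[ν] ⇑u ∘ S^[n] := by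
    intro n
    induction n with
    | zero =>
      intro u
      simp only [pow_zero, ContinuousLinearMap.one_apply, Function.iterate_zero,
        Function.comp_id]
      exact Filter.EventuallyEq.rfl
    | succ n ih =>
      intro u
      have h1 : (V ^ (n + 1)) u = (V ^ n) (V u) := by
        rw [pow_succ]; rfl
      have h2 : (⇑u ∘ S) ∘ S^[n] = ⇑u ∘ S^[n + 1] := by
        funext p
        simp [Function.comp, Function.iterate_succ_apply']
      rw [h1]
      exact (ih (V u)).trans (h2 ▸ (hVcoe u).comp_tendsto
        (hSn n).quasiMeasurePreserving.tendsto_ae)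
  have hnormV : ∀ (n : ℕ) (u : Lp ℝ 2 ν), ‖(V ^ n) u‖ = ‖u‖ := by
    intro n
    induction n with
    | zero => intro u; simp
    | succ n ih =>
      intro u
      have h1 : (V ^ (n + 1)) u = (V ^ n) (V u) := by rw [pow_succ]; rfl
      rw [h1, ih (V u)]
      exact Vli.norm_map u
  -- inner product computations
  have hinner_gen : ∀ (n : ℕ) (W : X × X → ℝ) (hW2 : MemLp W 2 ν) (φ : X → ℝ),
      (∀ p : X × X, F (S^[n] p) * W p = φ p.1 * φ p.2) →
      (inner ℝ ((V ^ n) Fl) (hW2.toLp W) : ℝ) = (∫ x, φ x ∂μ) * (∫ x, φ x ∂μ) := by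
    intro n W hW2 φ hφ
    rw [L2.inner_def]
    have h1 : ⇑((V ^ n) Fl) =ᵐ[ν] F ∘ S^[n] :=
      (hpow n Fl).trans (hF2.coeFn_toLp.comp_tendsto (hSn n).quasiMeasurePreserving.tendsto_ae)
    have h2 : ⇑(hW2.toLp W) =ᵐ[ν] W := hW2.coeFn_toLp
    have h3 : ∫ p, (inner ℝ (⇑((V ^ n) Fl) p) (⇑(hW2.toLp W) p) : ℝ) ∂ν
        = ∫ p : X × X, φ p.1 * φ p.2 ∂ν := by
      apply integral_congr_ae
      filter_upwards [h1, h2] with p e1 e2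
      have : (inner ℝ (⇑((V ^ n) Fl) p) (⇑(hW2.toLp W) p) : ℝ)
          = ⇑((V ^ n) Fl) p * ⇑(hW2.toLp W) p := by rw [RCLike.inner_apply', conj_trivial]
      rw [this, e1, e2]
      exact hφ p
    rw [h3, hν]
    exact integral_prod_mul φ φ
  set α : ℕ → ℝ := fun n => ∫ x, f (T^[n] x) * f x ∂μ with hα
  set β : ℕ → ℝ := fun n => ∫ x, f (T^[n] x) * g x ∂μ with hβ
  have hSit : ∀ n : ℕ, S^[n] = Prod.map (T^[n]) (T^[n]) := fun n => Prod.map_iterate T T n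
  have hαinner : ∀ n, (inner ℝ ((V ^ n) Fl) Fl : ℝ) = α n * α n := by
    intro n
    exact hinner_gen n F hF2 (fun x => f (T^[n] x) * f x)
      (fun p => by rw [hSit n]; show f (T^[n] p.1) * f (T^[n] p.2) * (f p.1 * f p.2) = _; ring)
  have hβinner : ∀ n, (inner ℝ ((V ^ n) Fl) Gl : ℝ) = β n * β n := by
    intro n
    exact hinner_gen n G hG2 (fun x => f (T^[n] x) * g x)
      (fun p => by rw [hSit n]; show f (T^[n] p.1) * f (T^[n] p.2) * (g p.1 * g p.2) = _; ring)
  -- integral identities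
  have hIndInt : ∀ {s : Set X}, MeasurableSet s →
      ∫ x, s.indicator (fun _ => (1:ℝ)) x ∂μ = (μ s).toReal := by
    intro s hs
    rw [integral_indicator_const (1:ℝ) hs, smul_eq_mul, mul_one]
    rfl
  have hInd : ∀ {s : Set X}, MeasurableSet s →
      Integrable (s.indicator (fun _ => (1:ℝ))) μ :=
    fun hs => (integrable_const 1).indicator hs
  have hαeq : ∀ n, α n = (μ (T^[n] ⁻¹' A ∩ A)).toReal - c * c := by
    intro n
    have hA' : MeasurableSet (T^[n] ⁻¹' A) := (hTn n).measurable hA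
    have hpt : (fun x => f (T^[n] x) * f x) = fun x =>
        (T^[n] ⁻¹' A ∩ A).indicator (fun _ => (1:ℝ)) x
        - c * (T^[n] ⁻¹' A).indicator (fun _ => (1:ℝ)) x
        - c * A.indicator (fun _ => (1:ℝ)) x + c * c := by
      funext x
      by_cases h1 : T^[n] x ∈ A <;> by_cases h2 : x ∈ A <;>
        simp [hf, Set.indicator_apply, Set.mem_inter_iff, Set.mem_preimage, h1, h2] <;> ring
    have : α n = ∫ x, ((T^[n] ⁻¹' A ∩ A).indicator (fun _ => (1:ℝ)) x
        - c * (T^[n] ⁻¹' A).indicator (fun _ => (1:ℝ)) x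
        - c * A.indicator (fun _ => (1:ℝ)) x + c * c) ∂μ := by
      rw [hα]; exact congrArg (fun u => ∫ x, u x ∂μ) hpt
    rw [this, integral_add, integral_sub, integral_sub, integral_const_mul,
      integral_const_mul, hIndInt (hA'.inter hA), hIndInt hA', hIndInt hA,
      (hTn n).measure_preimage hA.nullMeasurableSet, integral_const]
    · simp [measure_univ]; try ring
    · exact hInd (hA'.inter hA)
    · exact (hInd hA').const_mul c
    · exact ((hInd (hA'.inter hA)).sub ((hInd hA').const_mul c))
    · exact (hInd hA).const_mul c
    · exact (((hInd (hA'.inter hA)).sub ((hInd hA').const_mul c)).sub ((hInd hA).const_mul c))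
    · exact integrable_const _
  have hβeq : ∀ n, β n = (μ (T^[n] ⁻¹' A ∩ B)).toReal - c * d := by
    intro n
    have hA' : MeasurableSet (T^[n] ⁻¹' A) := (hTn n).measurable hA
    have hpt : (fun x => f (T^[n] x) * g x) = fun x =>
        (T^[n] ⁻¹' A ∩ B).indicator (fun _ => (1:ℝ)) x
        - d * (T^[n] ⁻¹' A).indicator (fun _ => (1:ℝ)) x
        - c * B.indicator (fun _ => (1:ℝ)) x + c * d := by
      funext x
      by_cases h1 : T^[n] x ∈ A <;> by_cases h2 : x ∈ B <;>
        simp [hf, hg, Set.indicator_apply, Set.mem_inter_iff, Set.mem_preimage, h1, h2] <;> ring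
    have : β n = ∫ x, ((T^[n] ⁻¹' A ∩ B).indicator (fun _ => (1:ℝ)) x
        - d * (T^[n] ⁻¹' A).indicator (fun _ => (1:ℝ)) x
        - c * B.indicator (fun _ => (1:ℝ)) x + c * d) ∂μ := by
      rw [hβ]; exact congrArg (fun u => ∫ x, u x ∂μ) hpt
    rw [this, integral_add, integral_sub, integral_sub, integral_const_mul,
      integral_const_mul, hIndInt (hA'.inter hB), hIndInt hA', hIndInt hB,
      (hTn n).measure_preimage hA.nullMeasurableSet, integral_const]
    · simp [measure_univ]; try ring
    · exact hInd (hA'.inter hB)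
    · exact (hInd hA').const_mul d
    · exact ((hInd (hA'.inter hB)).sub ((hInd hA').const_mul d))
    · exact (hInd hB).const_mul c
    · exact (((hInd (hA'.inter hB)).sub ((hInd hA').const_mul d)).sub ((hInd hB).const_mul c))
    · exact integrable_const _
  -- mean ergodic theorem
  have hVnorm : ‖V‖ ≤ 1 := Vli.norm_toContinuousLinearMap_le
  set h0 := Submodule.orthogonalProjectionOnto (V.eqLocus (1 : Lp ℝ 2 ν →L[ℝ] Lp ℝ 2 ν)) Fl with hh0def
  set hE : Lp ℝ 2 ν := (h0 : Lp ℝ 2 ν) with hhE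
  have hMET : Tendsto (fun L => birkhoffAverage ℝ (⇑V) _root_.id L Fl) atTop (nhds hE) :=
    V.tendsto_birkhoffAverage_orthogonalProjection hVnorm Fl
  have hfix : V hE = hE := by
    have := LinearMap.mem_eqLocus.mp h0.2
    exact this
  have hfixn : ∀ n : ℕ, (V ^ n) hE = hE := by
    intro n
    show (⇑(V ^ n)) hE = hE
    rw [FunLike.coe_pow_eq_iterate]
    exact Function.iterate_fixed hfix n
  have hhF : (inner ℝ hE Fl : ℝ) = ‖hE‖ ^ 2 := by
    have h1 := Submodule.starProjection_inner_eq_zero (𝕜 := ℝ) Fl hE h0.2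
    rw [inner_sub_left, sub_eq_zero] at h1
    calc (inner ℝ hE Fl : ℝ) = (inner ℝ Fl hE : ℝ) := real_inner_comm _ _
    _ = (inner ℝ hE hE : ℝ) := h1
    _ = ‖hE‖ ^ 2 := real_inner_self_eq_norm_sq hE
  have hbirk : ∀ L : ℕ, birkhoffAverage ℝ (⇑V) _root_.id L Fl
      = (L : ℝ)⁻¹ • ∑ k ∈ Finset.range L, (V ^ k) Fl := by
    intro L
    unfold birkhoffAverage birkhoffSum
    congr 1
    exact Finset.sum_congr rfl fun k _ => by rw [FunLike.coe_pow_eq_iterate]; rfl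
  have hVn_birk : ∀ n L : ℕ, (V ^ n) (birkhoffAverage ℝ (⇑V) _root_.id L Fl)
      = (L : ℝ)⁻¹ • ∑ j ∈ Finset.range L, (V ^ (n + j)) Fl := by
    intro n L
    rw [hbirk, _root_.map_smul, _root_.map_sum]
    congr 1
    exact Finset.sum_congr rfl fun j _ => by
      rw [pow_add, ContinuousLinearMap.mul_apply]
  have hrunbound : ∀ n L : ℕ,
      |((L:ℝ)⁻¹ * ∑ j ∈ Finset.range L, α (n + j) * α (n + j)) - ‖hE‖ ^ 2|
        ≤ ‖birkhoffAverage ℝ (⇑V) _root_.id L Fl - hE‖ * ‖Fl‖ := by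
    intro n L
    have e1 : (inner ℝ ((V ^ n) (birkhoffAverage ℝ (⇑V) _root_.id L Fl)) Fl : ℝ)
        = (L:ℝ)⁻¹ * ∑ j ∈ Finset.range L, α (n + j) * α (n + j) := by
      rw [hVn_birk n L, real_inner_smul_left, sum_inner]
      congr 1
      exact Finset.sum_congr rfl fun j _ => hαinner (n + j)
    have e2 : (inner ℝ ((V ^ n) hE) Fl : ℝ) = ‖hE‖ ^ 2 := by rw [hfixn n]; exact hhF
    calc |((L:ℝ)⁻¹ * ∑ j ∈ Finset.range L, α (n + j) * α (n + j)) - ‖hE‖ ^ 2|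
        = |(inner ℝ ((V ^ n) (birkhoffAverage ℝ (⇑V) _root_.id L Fl - hE)) Fl : ℝ)| := by
          rw [map_sub, inner_sub_left, e1, e2]
    _ ≤ ‖(V ^ n) (birkhoffAverage ℝ (⇑V) _root_.id L Fl - hE)‖ * ‖Fl‖ :=
        abs_real_inner_le_norm _ _
    _ = ‖birkhoffAverage ℝ (⇑V) _root_.id L Fl - hE‖ * ‖Fl‖ := by rw [hnormV]
  -- h = 0 using the full-set hypothesis
  have hhzero : hE = 0 := by
    obtain ⟨J, hJfull, hJtend⟩ := hyp A hA
    have hαtend : Tendsto α (atTop ⊓ 𝓟 J) (nhds 0) := by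
      have h1 : Tendsto (fun n : ℕ => (μ (T^[n] ⁻¹' A ∩ A)).toReal - c ^ 2)
          (atTop ⊓ 𝓟 J) (nhds (c ^ 2 - c ^ 2)) := hJtend.sub_const _
      rw [sub_self] at h1
      refine h1.congr fun n => ?_
      rw [hαeq n]; ring
    suffices hnn : ∀ ε : ℝ, 0 < ε → ‖hE‖ ^ 2 ≤ 2 * ε by
      have h1 : ‖hE‖ ^ 2 ≤ 0 := by
        by_contra hpos
        push_neg at hpos
        have := hnn (‖hE‖ ^ 2 / 4) (by linarith)
        linarith
      have h2 : ‖hE‖ = 0 := by nlinarith [norm_nonneg hE, sq_nonneg ‖hE‖]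
      exact norm_eq_zero.mp h2
    intro ε hε
    have hev : ∀ᶠ L in atTop,
        ‖birkhoffAverage ℝ (⇑V) _root_.id L Fl - hE‖ * ‖Fl‖ < ε := by
      have h1 : Tendsto (fun L => ‖birkhoffAverage ℝ (⇑V) _root_.id L Fl - hE‖ * ‖Fl‖)
          atTop (nhds (‖hE - hE‖ * ‖Fl‖)) :=
        (hMET.sub_const hE).norm.mul_const ‖Fl‖
      rw [sub_self, norm_zero, zero_mul] at h1
      exact h1.eventually_lt_const hε
    obtain ⟨L, hL1, hLge⟩ := (hev.and (eventually_ge_atTop 1)).exists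
    have hsqrt : (0:ℝ) < Real.sqrt ε := Real.sqrt_pos.mpr hε
    have h2 : ∀ᶠ n in atTop ⊓ 𝓟 J, |α n| < Real.sqrt ε := by
      have := Metric.tendsto_nhds.mp hαtend (Real.sqrt ε) hsqrt
      refine this.mono fun n hn => ?_
      rwa [Real.dist_eq, sub_zero] at hn
    rw [eventually_inf_principal, eventually_atTop] at h2
    obtain ⟨N, hN⟩ := h2
    obtain ⟨k, hk⟩ := hJfull (N + L)
    set n := max k N with hndef
    have hkn : k ≤ n := le_max_left k N
    have hNn : N ≤ n := le_max_right k N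
    have hrunJ : ∀ j, j < L → (n + j ∈ J ∧ N ≤ n + j) := by
      intro j hj
      have hnk : n = k ∨ n = N := max_choice k N
      refine ⟨?_, by omega⟩
      obtain ⟨i, hi, hni⟩ : ∃ i, i ≤ N + L ∧ n + j = k + i :=
        ⟨n + j - k, by omega, by omega⟩
      rw [hni]; exact hk i hi
    have hterm : ∀ j ∈ Finset.range L, α (n + j) * α (n + j) ≤ ε := by
      intro j hj
      rw [Finset.mem_range] at hj
      obtain ⟨hJmem, hge⟩ := hrunJ j hj
      have h3 := hN (n + j) hge hJmem
      have h4 : α (n + j) * α (n + j) = |α (n + j)| ^ 2 := by rw [sq_abs]; ring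
      rw [h4]
      calc |α (n + j)| ^ 2 ≤ (Real.sqrt ε) ^ 2 := by
            apply pow_le_pow_left₀ (abs_nonneg _) h3.le
      _ = ε := Real.sq_sqrt hε.le
    have hLpos : (0:ℝ) < L := by exact_mod_cast hLge
    have hsum_le : (L:ℝ)⁻¹ * ∑ j ∈ Finset.range L, α (n + j) * α (n + j) ≤ ε := by
      have h5 : ∑ j ∈ Finset.range L, α (n + j) * α (n + j) ≤ L * ε := by
        have := Finset.sum_le_card_nsmul (Finset.range L) (fun j => α (n + j) * α (n + j)) ε hterm
        simpa [nsmul_eq_mul] using this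
      calc (L:ℝ)⁻¹ * ∑ j ∈ Finset.range L, α (n + j) * α (n + j)
          ≤ (L:ℝ)⁻¹ * (L * ε) := by
            apply mul_le_mul_of_nonneg_left h5 (by positivity)
      _ = ε := by field_simp
    have hsum_ge : 0 ≤ (L:ℝ)⁻¹ * ∑ j ∈ Finset.range L, α (n + j) * α (n + j) := by
      apply mul_nonneg (by positivity)
      exact Finset.sum_nonneg fun j _ => mul_self_nonneg _
    have hrb := hrunbound n L
    have h6 := abs_le.mp (hrb.trans hL1.le)
    linarith [h6.1, h6.2]
  -- Cesàro convergence of β²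
  have hcesaro : Tendsto (fun n : ℕ => (∑ k ∈ Finset.range n, β k * β k) / n)
      atTop (nhds 0) := by
    rw [hhzero] at hMET
    have h1 : Tendsto (fun L : ℕ => (inner ℝ (birkhoffAverage ℝ (⇑V) _root_.id L Fl) Gl : ℝ))
        atTop (nhds (inner ℝ (0 : Lp ℝ 2 ν) Gl : ℝ)) := hMET.inner tendsto_const_nhds
    rw [inner_zero_left] at h1
    refine h1.congr fun L => ?_
    rw [hbirk, real_inner_smul_left, sum_inner]
    rw [div_eq_inv_mul]
    congr 1
    exact Finset.sum_congr rfl fun k _ => hβinner k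
  -- conclude via Cauchy-Schwarz
  have hub : ∀ n : ℕ, (∑ k ∈ Finset.range n, |β k|) / n
      ≤ Real.sqrt ((∑ k ∈ Finset.range n, β k * β k) / n) := by
    intro n
    rcases Nat.eq_zero_or_pos n with rfl | hn
    · simp
    have hnpos : (0:ℝ) < n := by exact_mod_cast hn
    have hCS : (∑ k ∈ Finset.range n, |β k| * 1) ^ 2
        ≤ (∑ k ∈ Finset.range n, |β k| ^ 2) * (∑ k ∈ Finset.range n, (1:ℝ) ^ 2) :=
      Finset.sum_mul_sq_le_sq_mul_sq _ _ _
    simp only [mul_one, one_pow, Finset.sum_const, Finset.card_range, nsmul_eq_mul,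
      mul_one] at hCS
    have hCS2 : (∑ k ∈ Finset.range n, |β k|) ^ 2
        ≤ (∑ k ∈ Finset.range n, β k * β k) * n := by
      calc (∑ k ∈ Finset.range n, |β k|) ^ 2 ≤ (∑ k ∈ Finset.range n, |β k| ^ 2) * n := hCS
      _ = (∑ k ∈ Finset.range n, β k * β k) * n := by
          congr 1
          exact Finset.sum_congr rfl fun k _ => by rw [sq_abs]; ring
    have hSnn : (0:ℝ) ≤ ∑ k ∈ Finset.range n, β k * β k :=
      Finset.sum_nonneg fun k _ => mul_self_nonneg _
    have hAnn : (0:ℝ) ≤ (∑ k ∈ Finset.range n, |β k|) / n :=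
      div_nonneg (Finset.sum_nonneg fun k _ => abs_nonneg _) hnpos.le
    rw [Real.le_sqrt hAnn (div_nonneg hSnn hnpos.le)]
    rw [div_pow, div_le_div_iff₀ (by positivity) hnpos]
    calc (∑ k ∈ Finset.range n, |β k|) ^ 2 * n
        ≤ ((∑ k ∈ Finset.range n, β k * β k) * n) * n := by nlinarith [hCS2, hnpos.le]
    _ = (∑ k ∈ Finset.range n, β k * β k) * n ^ 2 := by ring
  have hsqz : Tendsto (fun n : ℕ => Real.sqrt ((∑ k ∈ Finset.range n, β k * β k) / n))
      atTop (nhds 0) := by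
    have := hcesaro.sqrt
    simpa [Real.sqrt_zero] using this
  have hlb : ∀ n : ℕ, (0:ℝ) ≤ (∑ k ∈ Finset.range n, |β k|) / n := by
    intro n
    apply div_nonneg _ (by positivity)
    exact Finset.sum_nonneg fun k _ => abs_nonneg _
  have hfinal : Tendsto (fun n : ℕ => (∑ k ∈ Finset.range n, |β k|) / n) atTop (nhds 0) :=
    tendsto_of_tendsto_of_tendsto_of_le_of_le tendsto_const_nhds hsqz hlb hub
  refine hfinal.congr fun n => ?_
  congr 1
  exact Finset.sum_congr rfl fun k _ => by rw [hβeq k]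

end Backward

theorem weakMixing_iff_full_set {X : Type*} [MeasurableSpace X]
    (μ : Measure X) [IsProbabilityMeasure μ]
    (T : X → X) (hT : MeasurePreserving T μ μ) :
    WeakMixing μ T ↔
      ∀ A : Set X, MeasurableSet A → ∃ J : Set ℕ, IsFullSet J ∧
        Tendsto (fun n : ℕ => (μ (T^[n] ⁻¹' A ∩ A)).toReal)
          (atTop ⊓ 𝓟 J) (nhds ((μ A).toReal ^ 2)) := by
  constructor
  · intro hwm A hA
    obtain ⟨J, hJfull, hbtend⟩ := full_of_cesaro
      (fun k => |(μ (T^[k] ⁻¹' A ∩ A)).toReal - (μ A).toReal * (μ A).toReal|)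
      (fun n => abs_nonneg _) (hwm A A hA hA)
    refine ⟨J, hJfull, ?_⟩
    have h1 : Tendsto (fun n : ℕ => (μ (T^[n] ⁻¹' A ∩ A)).toReal
        - (μ A).toReal * (μ A).toReal) (atTop ⊓ 𝓟 J) (nhds 0) :=
      squeeze_zero_norm (fun n => le_of_eq (Real.norm_eq_abs _)) hbtend
    have h2 := tendsto_sub_nhds_zero_iff.mp h1
    rwa [← sq] at h2
  · exact weakMixing_of_full_set μ T hT
end

section
/- Fix ω ∈ ℝ/ℤ. For μ = 1, the set A_{1,ω} = { t ∈ ℝ/ℤ : ‖t + pω‖ < 1/p for infinitely many p ∈ ℕ } contains every t ∈ ℝ/ℤ that is not of the form −qω mod 1 for some integer q. -/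
open Set

lemma normCoeLe (v : ℝ) : ‖(v : AddCircle (1:ℝ))‖ ≤ |v| := by
  rw [AddCircle.norm_eq]
  simpa using round_le v 0

lemma intCoeZero (m : ℤ) : ((m : ℝ) : AddCircle (1:ℝ)) = 0 := by
  rw [AddCircle.coe_eq_zero_iff]
  exact ⟨m, by simp⟩

lemma exists_good_rat {Ω : ℝ} (hΩ : Irrational Ω) (M : ℕ) :
    ∃ r : ℚ, |Ω - (r:ℝ)| < 1/(r.den:ℝ)^2 ∧ M < r.den := by
  by_contra h
  push_neg at h
  refine Real.infinite_rat_abs_sub_lt_one_div_den_sq_of_irrational hΩ ?_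
  set B : ℤ := ⌈(|Ω|+1)*M⌉ with hB
  have hfin : ((Set.Icc (-B) B) ×ˢ (Set.Icc 1 M)).Finite :=
    (Set.finite_Icc _ _).prod (Set.finite_Icc _ _)
  refine (hfin.image (fun z : ℤ × ℕ => (z.1 : ℚ)/(z.2 : ℚ))).subset ?_
  rintro r hr
  have hden : r.den ≤ M := h r hr
  have hden1 : (1:ℝ) ≤ r.den := by exact_mod_cast r.pos
  have h1 : |Ω - (r:ℝ)| < 1 := lt_of_lt_of_le hr (by
    rw [div_le_one (by positivity)]
    nlinarith)
  have habs : |(r:ℝ)| ≤ |Ω| + 1 := by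
    have := abs_sub_abs_le_abs_sub (r:ℝ) Ω
    rw [abs_sub_comm] at this
    linarith
  have hnum : |r.num| ≤ B := by
    have h2 : (|r.num| : ℝ) = |(r:ℝ)| * r.den := by
      rw [Rat.cast_def]
      rw [abs_div]
      field_simp
      rw [Nat.abs_cast]
    have h3 : (|r.num| : ℝ) ≤ (|Ω|+1) * M := by
      rw [h2]
      have : (r.den : ℝ) ≤ M := by exact_mod_cast hden
      have h0 : (0:ℝ) ≤ |(r:ℝ)| := abs_nonneg _
      nlinarith
    have h4 : ((|Ω|+1) * M : ℝ) ≤ (B : ℝ) := Int.le_ceil _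
    exact_mod_cast h3.trans h4
  refine ⟨(r.num, r.den), ?_, ?_⟩
  · constructor
    · simp only [Set.mem_Icc]
      exact abs_le.mp hnum
    · exact ⟨r.pos, hden⟩
  · simpa using (Rat.num_div_den r)


lemma key (Ω T : ℝ) (q : ℕ) (a : ℤ) (hq2 : 2 ≤ q) (hcop : IsCoprime a (q:ℤ))
    (hθ : |(q:ℝ)*Ω - a| < 1/q) :
    ∃ p : ℕ, p < q ∧ ‖((T + p*Ω : ℝ) : AddCircle (1:ℝ))‖ ≤ 1/q := by
  have hq0 : (0:ℝ) < q := by positivity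
  have hqz : (q:ℤ) ≠ 0 := by positivity
  have hq1 : (q:ℝ) * (1/q) = 1 := by field_simp
  set θ : ℝ := (q:ℝ)*Ω - a with hθdef
  have hθa := abs_lt.mp hθ
  obtain ⟨u, w, huw⟩ := hcop
  obtain ⟨c, hcθ⟩ : ∃ c:ℤ, (0 ≤ θ → -1 ≤ (q:ℝ)*T+c ∧ (q:ℝ)*T+c ≤ 0) ∧
      (θ < 0 → 0 ≤ (q:ℝ)*T+c ∧ (q:ℝ)*T+c ≤ 1) := by
    rcases le_or_gt 0 θ with h|h
    · refine ⟨-(⌊(q:ℝ)*T⌋+1), fun _ => ⟨?_, ?_⟩, fun h' => absurd h (not_le.mpr h')⟩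
      · push_cast; linarith [Int.floor_le ((q:ℝ)*T)]
      · push_cast; linarith [Int.lt_floor_add_one ((q:ℝ)*T)]
    · refine ⟨-⌊(q:ℝ)*T⌋, fun h' => absurd h (not_lt.mpr h'), fun _ => ⟨?_, ?_⟩⟩
      · push_cast; linarith [Int.floor_le ((q:ℝ)*T)]
      · push_cast; linarith [Int.lt_floor_add_one ((q:ℝ)*T)]
  obtain ⟨p, hpP, hpq⟩ : ∃ p:ℕ, (p:ℤ) = u*c % q ∧ p < q := by
    refine ⟨(u*c % q).toNat, Int.toNat_of_nonneg (Int.emod_nonneg _ hqz), ?_⟩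
    have h1 : u*c % q < q := Int.emod_lt_of_pos _ (by positivity)
    have h0 : 0 ≤ u*c % q := Int.emod_nonneg _ hqz
    omega
  refine ⟨p, hpq, ?_⟩
  have hdvd : (q:ℤ) ∣ (p:ℤ)*a - c := by
    have h1 : (q:ℤ) ∣ (p:ℤ) - u*c := by
      rw [hpP, Int.emod_def]
      exact ⟨-(u*c/q), by ring⟩
    have h2 : (q:ℤ) ∣ u*c*a - c := by
      refine ⟨-(c*w), ?_⟩
      have huv : u*a = 1 - w*q := by linarith [huw]
      calc u*c*a - c = c*(u*a) - c := by ring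
        _ = c*(1 - w*q) - c := by rw [huv]
        _ = q * -(c*w) := by ring
    have h3 := Int.dvd_add (Dvd.dvd.mul_right h1 a) h2
    convert h3 using 1
    ring
  obtain ⟨m, hm⟩ := hdvd
  have hmr : (p:ℝ)*a - c = q*m := by exact_mod_cast congrArg (Int.cast : ℤ → ℝ) hm
  have hid : T + (p:ℝ)*Ω = ((q:ℝ)*T + c + p*θ)/q + m := by
    rw [hθdef]
    field_simp
    ring_nf
    nlinarith [hmr]
  -- bounds
  have hpq' : (p:ℝ) ≤ (q:ℝ) - 1 := by
    have h1 : p + 1 ≤ q := by omega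
    have h2 : (p:ℝ) + 1 ≤ q := by exact_mod_cast h1
    linarith
  have hp0 : (0:ℝ) ≤ p := by positivity
  have hNle : |(q:ℝ)*T + c + p*θ| ≤ 1 := by
    rcases le_or_gt 0 θ with hsign | hsign
    · obtain ⟨hl, hr⟩ := hcθ.1 hsign
      have h1 : 0 ≤ (p:ℝ)*θ := mul_nonneg hp0 hsign
      have h2 : (p:ℝ)*θ ≤ ((q:ℝ)-1)*θ := mul_le_mul_of_nonneg_right hpq' hsign
      have h3 : (q:ℝ)*θ < 1 := by
        calc (q:ℝ)*θ < (q:ℝ)*(1/q) := mul_lt_mul_of_pos_left hθa.2 hq0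
          _ = 1 := hq1
      rw [abs_le]; constructor <;> nlinarith
    · obtain ⟨hl, hr⟩ := hcθ.2 hsign
      have h1 : (p:ℝ)*θ ≤ 0 := mul_nonpos_of_nonneg_of_nonpos hp0 hsign.le
      have h2 : ((q:ℝ)-1)*θ ≤ (p:ℝ)*θ := mul_le_mul_of_nonpos_right hpq' hsign.le
      have h3 : -1 < (q:ℝ)*θ := by
        have h4 := mul_lt_mul_of_pos_left hθa.1 hq0
        rw [mul_neg, hq1] at h4
        linarith
      rw [abs_le]; constructor <;> nlinarith
  have hcoe : ((T + (p:ℝ)*Ω : ℝ) : AddCircle (1:ℝ))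
      = ((((q:ℝ)*T + c + p*θ)/q : ℝ) : AddCircle (1:ℝ)) := by
    rw [hid, AddCircle.coe_add, intCoeZero, add_zero]
  rw [hcoe]
  refine (normCoeLe _).trans ?_
  rw [abs_div, abs_of_pos hq0, div_le_div_iff₀ hq0 hq0]
  nlinarith [hNle]


/-- Minkowski's theorem on inhomogeneous Diophantine approximation on the circle:
for irrational `ω` (i.e. no positive multiple of `ω` is `0` in `ℝ/ℤ`), every `t`
not in the `ℤ`-orbit `{-qω}` satisfies `‖t + pω‖ < 1/p` for infinitely many `p`. -/
theorem minkowski_inhomogeneous (ω : AddCircle (1:ℝ))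
    (hω : ∀ n : ℕ, 0 < n → n • ω ≠ 0)
    (t : AddCircle (1:ℝ)) (ht : ∀ q : ℤ, t ≠ -(q • ω)) :
    {p : ℕ | ‖t + p • ω‖ < 1 / (p : ℝ)}.Infinite := by
  obtain ⟨Ω, rfl⟩ := QuotientAddGroup.mk_surjective ω
  obtain ⟨T, rfl⟩ := QuotientAddGroup.mk_surjective t
  have hIrr : Irrational Ω := by
    rw [Irrational]
    rintro ⟨r, hr⟩
    refine hω r.den r.pos ?_
    have h1 : ((r.den : ℝ)) * Ω = ((r.num : ℝ)) := by
      rw [← hr, Rat.cast_def]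
      field_simp
    calc (r.den : ℕ) • ((Ω : ℝ) : AddCircle (1:ℝ))
        = ((r.den • Ω : ℝ) : AddCircle (1:ℝ)) := (AddCircle.coe_nsmul _).symm
      _ = (((r.num : ℝ) : ℝ) : AddCircle (1:ℝ)) := by rw [nsmul_eq_mul, h1]
      _ = 0 := intCoeZero r.num
  apply Set.infinite_of_not_bddAbove
  rintro ⟨b, hb⟩
  -- positive min over j ≤ b
  set F : Finset ℝ := (Finset.range (b+1)).image (fun j => ‖(↑T : AddCircle (1:ℝ)) + j • (↑Ω : AddCircle (1:ℝ))‖) with hF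
  have hFne : F.Nonempty := ⟨_, Finset.mem_image.mpr ⟨0, Finset.mem_range.mpr (by omega), rfl⟩⟩
  set ε : ℝ := F.min' hFne with hε
  have hεpos : 0 < ε := by
    rw [hε]
    apply (Finset.lt_min'_iff F hFne).mpr
    rintro y hy
    rw [hF] at hy
    obtain ⟨j, _, rfl⟩ := Finset.mem_image.mp hy
    rw [norm_pos_iff]
    intro h0
    refine ht j ?_
    rw [natCast_zsmul]
    exact add_eq_zero_iff_eq_neg.mp h0
  obtain ⟨M, hM⟩ := exists_nat_gt (1/ε)
  obtain ⟨r, hr, hden⟩ := exists_good_rat hIrr (max (M+1) 2)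
  set q : ℕ := r.den with hqdef
  have hq2 : 2 ≤ q := le_trans (le_max_right _ _) (le_of_lt hden)
  have hq0 : (0:ℝ) < q := by positivity
  have hcop : IsCoprime (r.num) ((q:ℕ):ℤ) := by
    rw [Int.isCoprime_iff_gcd_eq_one]
    exact_mod_cast r.reduced
  have hθ : |(q:ℝ)*Ω - r.num| < 1/q := by
    have h1 : (q:ℝ) * (r:ℝ) = (r.num : ℝ) := by
      rw [Rat.cast_def]
      field_simp
      rw [hqdef]; ring
    have h2 : |(q:ℝ)*Ω - q*(r:ℝ)| < 1/q := by
      rw [← mul_sub, abs_mul, abs_of_pos hq0]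
      calc (q:ℝ) * |Ω - r| < q * (1/(q:ℝ)^2) := by
            exact mul_lt_mul_of_pos_left hr hq0
        _ = 1/q := by rw [sq]; field_simp
    rwa [h1] at h2
  obtain ⟨p, hpq, hnorm⟩ := key Ω T q r.num hq2 hcop hθ
  -- translate norm statement
  have hco : ((T + p*Ω : ℝ) : AddCircle (1:ℝ)) = (↑T : AddCircle (1:ℝ)) + p • (↑Ω : AddCircle (1:ℝ)) := by
    rw [AddCircle.coe_add, ← AddCircle.coe_nsmul, nsmul_eq_mul]
  rw [hco] at hnorm
  -- 1/q < ε
  have hqM : (M:ℝ) < q := by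
    have : M + 1 ≤ q := le_trans (le_max_left _ _) (le_of_lt hden)
    have h2 : ((M:ℝ)) + 1 ≤ q := by exact_mod_cast this
    linarith
  have hεq : 1/(q:ℝ) < ε := by
    rw [div_lt_iff₀ hq0]
    have hMpos : (0:ℝ) < M := lt_trans (by positivity) hM
    calc (1:ℝ) = (1/ε) * ε := by field_simp
      _ < M * ε := by exact mul_lt_mul_of_pos_right hM hεpos
      _ < q * ε := by exact mul_lt_mul_of_pos_right hqM hεpos
      _ = ε * q := mul_comm _ _
  have hsmall : ‖(↑T : AddCircle (1:ℝ)) + p • (↑Ω : AddCircle (1:ℝ))‖ < ε := lt_of_le_of_lt hnorm hεq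
  -- p > b
  have hpb : b < p := by
    by_contra hle
    push_neg at hle
    have hmem : ‖(↑T : AddCircle (1:ℝ)) + p • (↑Ω : AddCircle (1:ℝ))‖ ∈ F := by
      rw [hF]
      exact Finset.mem_image.mpr ⟨p, Finset.mem_range.mpr (by omega), rfl⟩
    have hmin := Finset.min'_le F _ hmem
    rw [← hε] at hmin
    linarith
  -- p ∈ S
  have hp1 : 1 ≤ p := by omega
  have hmemS : p ∈ {p : ℕ | ‖(↑T : AddCircle (1:ℝ)) + p • (↑Ω : AddCircle (1:ℝ))‖ < 1 / (p : ℝ)} := by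
    have hp0 : (0:ℝ) < p := by exact_mod_cast hp1
    have : 1/(q:ℝ) < 1/(p:ℝ) := by
      apply one_div_lt_one_div_of_lt hp0
      exact_mod_cast hpq
    exact lt_of_le_of_lt hnorm this
  exact absurd (hb hmemS) (by omega)
end

section
/- Let T be a measure-preserving transformation of a probability space (X, β, μ) and suppose that for every measurable A there is a full set J ⊆ ℕ with lim_{n∈J} μ(T^{-n}A ∩ A) = μ(A)². Then T has no nontrivial eigenfunction: if f ∈ L²(μ) satisfies f∘T = λf a.e. for some complex λ with |λ| = 1 and λ ≠ 1, then f = 0 a.e. -/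
open MeasureTheory Filter

theorem no_nontrivial_eigenfunction_of_full_set_mixing {X : Type*} [MeasurableSpace X]
    (μ : Measure X) [IsProbabilityMeasure μ]
    (T : X → X) (hT : MeasurePreserving T μ μ)
    (h : ∀ A : Set X, MeasurableSet A → ∃ J : Set ℕ, IsFullSet J ∧
      Tendsto (fun n : ℕ => (μ (T^[n] ⁻¹' A ∩ A)).toReal)
        (atTop ⊓ 𝓟 J) (nhds ((μ A).toReal ^ 2)))
    (f : X → ℂ) (hf : MemLp f 2 μ)
    (lam : ℂ) (hlam : ‖lam‖ = 1) (hne : lam ≠ 1)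
    (heig : ∀ᵐ x ∂μ, f (T x) = lam * f x) :
    f =ᵐ[μ] 0 := by
  by_contra h0
  obtain ⟨g, hgmeas, hfg⟩ : ∃ g, StronglyMeasurable g ∧ f =ᵐ[μ] g :=
    ⟨hf.1.mk f, hf.1.stronglyMeasurable_mk, hf.1.ae_eq_mk⟩
  -- the eigenvalue gap
  set ε : ℝ := ‖lam - 1‖ with hεdef
  have hε : 0 < ε := by
    simpa [hεdef, sub_eq_zero] using hne
  set ε' : ℝ := ε / 3 with hε'def
  have hε' : 0 < ε' := by positivity
  set m : ℝ := min 1 ε' with hmdef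
  have hm0 : 0 < m := lt_min one_pos hε'
  have hm1 : m ≤ 1 := min_le_left _ _
  have hmε' : m ≤ ε' := min_le_right _ _
  -- iterated eigenvalue equation for g
  have heig' : ∀ᵐ x ∂μ, g (T x) = lam * g x := by
    have h1 : ∀ᵐ x ∂μ, f (T x) = g (T x) := hT.quasiMeasurePreserving.ae hfg
    filter_upwards [heig, hfg, h1] with x h1 h2 h3
    rw [← h3, h1, h2]
  have hiter : ∀ n : ℕ, ∀ᵐ x ∂μ, g (T^[n] x) = lam ^ n * g x := by
    intro n
    induction n with
    | zero => simp
    | succ n ih =>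
      have h2 : ∀ᵐ x ∂μ, g (T^[n] (T x)) = lam ^ n * g (T x) :=
        hT.quasiMeasurePreserving.ae ih
      filter_upwards [h2, heig'] with x h2 h3
      rw [Function.iterate_succ_apply, h2, h3]; ring
  -- modulus of powers of lam
  have habs : ∀ n : ℕ, ‖lam ^ n‖ = 1 := by
    intro n; rw [norm_pow, hlam, one_pow]
  -- full sets contain arbitrarily large n with lam^n far from 1
  have hfar : ∀ (J : Set ℕ), IsFullSet J → ∀ M : ℕ,
      ∃ n, M ≤ n ∧ n ∈ J ∧ ε' ≤ ‖lam ^ n - 1‖ := by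
    intro J hJ M
    obtain ⟨k, hk⟩ := hJ (M + 2)
    set n := k + (M + 1) with hn
    have hn1 : n ∈ J := hk (M + 1) (by omega)
    have hn2 : n + 1 ∈ J := by
      have := hk (M + 2) le_rfl; simpa [hn, ← add_assoc] using this
    by_cases hc : ε' ≤ ‖lam ^ n - 1‖
    · exact ⟨n, by omega, hn1, hc⟩
    · refine ⟨n + 1, by omega, hn2, ?_⟩
      by_contra hc2
      push_neg at hc hc2
      have key : ‖lam ^ (n + 1) - lam ^ n‖ = ε := by
        have : lam ^ (n + 1) - lam ^ n = lam ^ n * (lam - 1) := by ring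
        rw [this, norm_mul, habs, one_mul]
      have hle : ‖lam ^ (n + 1) - lam ^ n‖ ≤
          ‖lam ^ (n + 1) - 1‖ + ‖lam ^ n - 1‖ := by
        have : lam ^ (n + 1) - lam ^ n = (lam ^ (n + 1) - 1) - (lam ^ n - 1) := by ring
        rw [this]
        exact
          norm_sub_le (lam ^ (n + 1) - 1) (lam ^ n - 1)
      rw [key] at hle
      have : ε < ε' + ε' := lt_of_le_of_lt hle (by linarith)
      rw [hε'def] at this; linarith
  -- find a set A where g is nearly a nonzero constant
  have hgne : μ {x | g x ≠ 0} ≠ 0 := by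
    intro hnull
    apply h0
    have hg0 : g =ᵐ[μ] 0 := by
      rw [Filter.EventuallyEq, ae_iff]
      simpa using hnull
    exact hfg.trans hg0
  obtain ⟨D, hDc, hDd⟩ := TopologicalSpace.exists_countable_dense ℂ
  set δ : ℂ → ℝ := fun c => m * ‖c‖ / 8 with hδdef
  have hcover : {x | g x ≠ 0} ⊆
      ⋃ c ∈ D ∩ {c : ℂ | c ≠ 0}, g ⁻¹' Metric.ball c (δ c) := by
    intro x hx
    have hz : ‖g x‖ > 0 := by
      simpa using hx
    obtain ⟨c, hcD, hcdist⟩ : ∃ c ∈ D, dist (g x) c < m * ‖g x‖ / 32 := by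
      have := hDd.exists_dist_lt (g x) (show (0:ℝ) < m * ‖g x‖ / 32 by positivity)
      obtain ⟨c, hc1, hc2⟩ := this
      exact ⟨c, hc1, hc2⟩
    have hcabs : ‖c‖ ≥ ‖g x‖ / 2 := by
      have h1 : ‖g x‖ - ‖c‖ ≤ dist (g x) c := by
        rw [Complex.dist_eq]
        exact norm_sub_norm_le (g x) c
      have h2 : m * ‖g x‖ / 32 ≤ ‖g x‖ / 32 := by
        nlinarith [hz, hm1, hm0]
      linarith
    have hcne : c ≠ 0 := by
      intro hcc
      rw [hcc] at hcabs
      simp only [norm_zero] at hcabs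
      linarith
    refine Set.mem_biUnion ⟨hcD, hcne⟩ ?_
    simp only [Set.mem_preimage, Metric.mem_ball]
    calc dist (g x) c < m * ‖g x‖ / 32 := hcdist
      _ ≤ m * ‖c‖ / 8 := by nlinarith
  obtain ⟨c, hcD, hcA⟩ : ∃ c ∈ D ∩ {c : ℂ | c ≠ 0},
      μ (g ⁻¹' Metric.ball c (δ c)) ≠ 0 := by
    by_contra hall
    push_neg at hall
    apply hgne
    refine le_antisymm ?_ zero_le
    calc μ {x | g x ≠ 0} ≤ μ (⋃ c ∈ D ∩ {c : ℂ | c ≠ 0}, g ⁻¹' Metric.ball c (δ c)) :=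
          measure_mono hcover
      _ = 0 := by
          rw [measure_biUnion_null_iff (hDc.mono Set.inter_subset_left)]
          exact hall
  have hcne : c ≠ 0 := hcD.2
  have hcpos : 0 < ‖c‖ := by simpa using hcne
  set A : Set X := g ⁻¹' Metric.ball c (δ c) with hAdef
  have hAmeas : MeasurableSet A :=
    hgmeas.measurable measurableSet_ball
  obtain ⟨J, hJfull, hJtend⟩ := h A hAmeas
  -- on far n's, the correlation set is null
  have hnull : ∀ n : ℕ, ε' ≤ ‖lam ^ n - 1‖ → μ (T^[n] ⁻¹' A ∩ A) = 0 := by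
    intro n hn
    have hae := hiter n
    rw [ae_iff] at hae
    refine measure_mono_null (fun x hx => ?_) hae
    simp only [Set.mem_setOf_eq]
    intro heq
    obtain ⟨hx1, hx2⟩ := hx
    simp only [hAdef, Set.mem_preimage, Metric.mem_ball, Complex.dist_eq] at hx1 hx2
    have h1 : ‖lam ^ n * g x - g x‖ < 2 * δ c := by
      calc ‖lam ^ n * g x - g x‖
          = ‖(g (T^[n] x) - c) - (g x - c)‖ := by rw [heq]; congr 1; ring
        _ ≤ ‖g (T^[n] x) - c‖ + ‖g x - c‖ := by
            exact
              norm_sub_le (g (T^[n] x) - c) (g x - c)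
        _ < 2 * δ c := by linarith
    have h2 : ‖lam ^ n * g x - g x‖ =
        ‖lam ^ n - 1‖ * ‖g x‖ := by
      rw [← norm_mul]; congr 1; ring
    have h3 : ‖g x‖ ≥ ‖c‖ / 2 := by
      have : ‖c‖ - ‖g x‖ ≤ ‖g x - c‖ := by
        have h4 : ‖c‖ - ‖g x‖ ≤ ‖c - g x‖ := norm_sub_norm_le c (g x)
        rw [norm_sub_rev] at h4
        exact h4
      have hδle : δ c ≤ ‖c‖ / 8 := by
        simp only [hδdef]; nlinarith
      linarith
    have : ε' * (‖c‖ / 2) ≤ ‖lam ^ n - 1‖ * ‖g x‖ := by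
      apply mul_le_mul hn h3 (by positivity) (by positivity)
    rw [← h2] at this
    have hδle : 2 * δ c ≤ ε' * ‖c‖ / 4 := by
      simp only [hδdef]; nlinarith
    nlinarith [hcpos, hε']
  -- frequently zero along the filter
  have hfreq : ∃ᶠ n in atTop ⊓ 𝓟 J,
      (fun n : ℕ => (μ (T^[n] ⁻¹' A ∩ A)).toReal) n ∈ ({0} : Set ℝ) := by
    apply Frequently.inf_principal
    rw [frequently_atTop]
    intro a
    obtain ⟨n, hna, hnJ, hnfar⟩ := hfar J hJfull a
    exact ⟨n, hna, hnJ, by simp [hnull n hnfar]⟩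
  have hcl : (μ A).toReal ^ 2 ∈ closure ({0} : Set ℝ) :=
    mem_closure_of_frequently_of_tendsto hfreq hJtend
  rw [closure_singleton, Set.mem_singleton_iff, pow_eq_zero_iff (by norm_num)] at hcl
  have : μ A = 0 := by
    rw [ENNReal.toReal_eq_zero_iff] at hcl
    rcases hcl with h1 | h1
    · exact h1
    · exact absurd h1 (measure_ne_top μ A)
  exact hcA this
end

section
/- Let a : ℕ → ℝ be a bounded nonnegative sequence. Then (1/n) Σ_{k=0}^{n-1} a_k → 0 if and only if there exists a set J ⊆ ℕ of full density such that a_n → 0 along n ∈ J. -/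
open Filter

/-- A set `J ⊆ ℕ` has *full density* if `#{n ∈ J : n ≤ N}/N → 1`. -/
def HasFullDensity (J : Set ℕ) : Prop :=
  Tendsto (fun N : ℕ => (Set.ncard {n | n ∈ J ∧ n ≤ N} : ℝ) / N) atTop (nhds 1)

namespace KVN

open Finset

open scoped Classical in
/-- number of elements of `J` below `N` -/
noncomputable def cnt (J : Set ℕ) (N : ℕ) : ℕ :=
  ((Finset.range N).filter (fun k => k ∈ J)).card

open scoped Classical in
lemma cnt_def (J : Set ℕ) (N : ℕ) :
    cnt J N = ((Finset.range N).filter (fun k => k ∈ J)).card := rfl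

lemma ncard_eq_cnt (J : Set ℕ) (N : ℕ) :
    Set.ncard {n | n ∈ J ∧ n ≤ N} = cnt J (N + 1) := by
  classical
  rw [cnt_def, ← Set.ncard_coe_finset]
  congr 1
  ext n
  simp [Nat.lt_succ_iff, and_comm]

lemma cnt_add_compl (J : Set ℕ) (N : ℕ) : cnt J N + cnt Jᶜ N = N := by
  classical
  have h := Finset.card_filter_add_card_filter_not
    (s := Finset.range N) (p := fun k => k ∈ J)
  simp only [Finset.card_range] at h
  rw [cnt_def, cnt_def]
  convert h using 3
  ext k
  simp

lemma cnt_le (J : Set ℕ) (N : ℕ) : cnt J N ≤ N := by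
  classical
  rw [cnt_def]
  simpa using Finset.card_filter_le (Finset.range N) (fun k => k ∈ J)

lemma tendsto_aux : Tendsto (fun N : ℕ => ((N : ℝ) + 1) / N) atTop (nhds 1) := by
  have h : ∀ᶠ N : ℕ in atTop, ((N : ℝ) + 1) / N = 1 + 1 / N := by
    filter_upwards [eventually_gt_atTop 0] with N hN
    have : (N : ℝ) ≠ 0 := by positivity
    field_simp
  rw [tendsto_congr' h]
  simpa using tendsto_const_nhds.add (tendsto_one_div_atTop_nhds_zero_nat (𝕜 := ℝ))

lemma tendsto_aux2 : Tendsto (fun N : ℕ => (N : ℝ) / (N + 1)) atTop (nhds 1) := by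
  have h : ∀ᶠ N : ℕ in atTop, (N : ℝ) / (N + 1) = (((N : ℝ) + 1) / N)⁻¹ := by
    filter_upwards [eventually_gt_atTop 0] with N hN
    rw [inv_div]
  rw [tendsto_congr' h]
  simpa using tendsto_aux.inv₀ (by norm_num)

lemma cnt_compl_of_cnt {J : Set ℕ} (h : Tendsto (fun N => (cnt J N : ℝ) / N) atTop (nhds 1)) :
    Tendsto (fun N => (cnt Jᶜ N : ℝ) / N) atTop (nhds 0) := by
  have he : ∀ᶠ N : ℕ in atTop, (cnt Jᶜ N : ℝ) / N = 1 - (cnt J N : ℝ) / N := by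
    filter_upwards [eventually_gt_atTop 0] with N hN
    have hN' : (N : ℝ) ≠ 0 := by positivity
    have h2 : (cnt J N : ℝ) + (cnt Jᶜ N : ℝ) = N := by exact_mod_cast cnt_add_compl J N
    field_simp
    linarith
  rw [tendsto_congr' he]
  have := (tendsto_const_nhds (x := (1:ℝ)) (f := atTop (α := ℕ))).sub h
  simpa using this

lemma cnt_of_cnt_compl {J : Set ℕ} (h : Tendsto (fun N => (cnt Jᶜ N : ℝ) / N) atTop (nhds 0)) :
    Tendsto (fun N => (cnt J N : ℝ) / N) atTop (nhds 1) := by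
  have he : ∀ᶠ N : ℕ in atTop, (cnt J N : ℝ) / N = 1 - (cnt Jᶜ N : ℝ) / N := by
    filter_upwards [eventually_gt_atTop 0] with N hN
    have hN' : (N : ℝ) ≠ 0 := by positivity
    have h2 : (cnt J N : ℝ) + (cnt Jᶜ N : ℝ) = N := by exact_mod_cast cnt_add_compl J N
    field_simp
    linarith
  rw [tendsto_congr' he]
  have := (tendsto_const_nhds (x := (1:ℝ)) (f := atTop (α := ℕ))).sub h
  simpa using this

lemma fullDensity_iff (J : Set ℕ) :
    HasFullDensity J ↔ Tendsto (fun N => (cnt Jᶜ N : ℝ) / N) atTop (nhds 0) := by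
  have hrw : (fun N : ℕ => (Set.ncard {n | n ∈ J ∧ n ≤ N} : ℝ) / N)
      = fun N : ℕ => (cnt J (N + 1) : ℝ) / N := by
    funext N; rw [ncard_eq_cnt]
  rw [HasFullDensity, hrw]
  constructor
  · intro h
    apply cnt_compl_of_cnt
    refine (tendsto_add_atTop_iff_nat (f := fun N => (cnt J N : ℝ) / N) 1).mp ?_
    have he : ∀ᶠ N : ℕ in atTop, (cnt J (N + 1) : ℝ) / (↑(N + 1) : ℝ)
        = ((cnt J (N + 1) : ℝ) / N) * ((N : ℝ) / (N + 1)) := by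
      filter_upwards [eventually_gt_atTop 0] with N hN
      have hN' : (N : ℝ) ≠ 0 := by positivity
      have hN1 : (N : ℝ) + 1 ≠ 0 := by positivity
      push_cast
      field_simp
    rw [tendsto_congr' he]
    have := h.mul tendsto_aux2
    simpa using this
  · intro h
    have h1 := cnt_of_cnt_compl h
    have h2 : Tendsto (fun N : ℕ => (cnt J (N + 1) : ℝ) / (↑(N + 1) : ℝ)) atTop (nhds 1) :=
      (tendsto_add_atTop_iff_nat (f := fun N => (cnt J N : ℝ) / N) 1).mpr h1
    have he : ∀ᶠ N : ℕ in atTop, (cnt J (N + 1) : ℝ) / N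
        = ((cnt J (N + 1) : ℝ) / (↑(N + 1) : ℝ)) * (((N : ℝ) + 1) / N) := by
      filter_upwards [eventually_gt_atTop 0] with N hN
      have hN' : (N : ℝ) ≠ 0 := by positivity
      have hN1 : (N : ℝ) + 1 ≠ 0 := by positivity
      push_cast
      field_simp
    rw [tendsto_congr' he]
    have := h2.mul tendsto_aux
    simpa using this

lemma markov (a : ℕ → ℝ) (hnn : ∀ n, 0 ≤ a n) {δ : ℝ} (hδ : 0 < δ)
    (h : Tendsto (fun n : ℕ => (∑ k ∈ Finset.range n, a k) / n) atTop (nhds 0)) :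
    Tendsto (fun N => (cnt {k | δ ≤ a k} N : ℝ) / N) atTop (nhds 0) := by
  classical
  have hb : ∀ N : ℕ, (cnt {k | δ ≤ a k} N : ℝ) / N
      ≤ ((∑ k ∈ Finset.range N, a k) / δ) / N := by
    intro N
    have hNn : (0 : ℝ) ≤ N := Nat.cast_nonneg N
    apply div_le_div_of_nonneg_right _ hNn
    rw [le_div_iff₀ hδ, cnt_def]
    calc ((((Finset.range N).filter (fun k => k ∈ {k | δ ≤ a k})).card : ℝ)) * δ
        ≤ ∑ k ∈ (Finset.range N).filter (fun k => k ∈ {k | δ ≤ a k}), a k := by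
          have hcs := Finset.card_nsmul_le_sum
            ((Finset.range N).filter (fun k => k ∈ {k | δ ≤ a k})) a δ
            (fun x hx => (Finset.mem_filter.mp hx).2)
          simpa [nsmul_eq_mul] using hcs
      _ ≤ ∑ k ∈ Finset.range N, a k :=
          Finset.sum_le_sum_of_subset_of_nonneg (Finset.filter_subset _ _)
            (fun i _ _ => hnn i)
  have hlim : Tendsto (fun N : ℕ => ((∑ k ∈ Finset.range N, a k) / δ) / N) atTop (nhds 0) := by
    have h2 := h.div_const δ
    simp only [zero_div] at h2
    have he : (fun N : ℕ => ((∑ k ∈ Finset.range N, a k) / δ) / N)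
        = fun N : ℕ => ((∑ k ∈ Finset.range N, a k) / N) / δ := by
      funext N; rw [div_right_comm]
    rw [he]
    exact h2
  exact squeeze_zero (fun N => by positivity) hb hlim

open scoped Classical in
lemma cnt_mono {S T : Set ℕ} (N : ℕ) (h : ∀ k, k < N → k ∈ S → k ∈ T) :
    cnt S N ≤ cnt T N := by
  rw [cnt_def, cnt_def]
  apply Finset.card_le_card
  intro k hk
  rw [Finset.mem_filter] at hk ⊢
  exact ⟨hk.1, h k (Finset.mem_range.mp hk.1) hk.2⟩

open scoped Classical in
lemma sum_notmem_le (a : ℕ → ℝ) {D : ℝ} (hD : 0 ≤ D) (hC : ∀ n, a n ≤ D)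
    (J : Set ℕ) (M n : ℕ) :
    ∑ k ∈ (Finset.Ico M n).filter (fun k => ¬ k ∈ J), a k ≤ D * cnt Jᶜ n := by
  calc ∑ k ∈ (Finset.Ico M n).filter (fun k => ¬ k ∈ J), a k
      ≤ ((Finset.Ico M n).filter (fun k => ¬ k ∈ J)).card • D := by
        apply Finset.sum_le_card_nsmul
        intro x _
        exact hC x
    _ ≤ (cnt Jᶜ n) • D := by
        apply nsmul_le_nsmul_left hD
        rw [cnt_def]
        apply Finset.card_le_card
        intro k hk
        simp only [Finset.mem_filter, Finset.mem_Ico] at hk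
        simp only [Finset.mem_filter, Finset.mem_range, Set.mem_compl_iff]
        exact ⟨hk.1.2, hk.2⟩
    _ = D * (cnt Jᶜ n) := by rw [nsmul_eq_mul]; ring

end KVN

/-- Koopman–von Neumann lemma. -/
theorem koopman_von_neumann (a : ℕ → ℝ) (hnn : ∀ n, 0 ≤ a n)
    (hbd : ∃ C : ℝ, ∀ n, a n ≤ C) :
    Tendsto (fun n : ℕ => (∑ k ∈ Finset.range n, a k) / n) atTop (nhds 0) ↔
      ∃ J : Set ℕ, HasFullDensity J ∧
        Tendsto a (atTop ⊓ 𝓟 J) (nhds 0) := by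
  classical
  obtain ⟨C, hC⟩ := hbd
  constructor
  · intro h
    have key : ∀ m : ℕ, ∃ T : ℕ, ∀ n ≥ T,
        (KVN.cnt {k | 1/((m:ℝ)+1) ≤ a k} n : ℝ) / n < 1/((m:ℝ)+1) := by
      intro m
      have hδ : (0:ℝ) < 1/((m:ℝ)+1) := by positivity
      exact eventually_atTop.mp ((KVN.markov a hnn hδ h).eventually_lt_const hδ)
    choose T hT using key
    set N : ℕ → ℕ := fun m => Nat.rec 0 (fun m Nm => max (Nm + 1) (T m)) m with hNdef
    have hNsucc : ∀ m, N (m+1) = max (N m + 1) (T m) := fun m => rfl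
    have hmono : StrictMono N := strictMono_nat_of_lt_succ (fun m =>
      lt_of_lt_of_le (Nat.lt_succ_self _) (by rw [hNsucc]; exact le_max_left _ _))
    have hle : ∀ m, m ≤ N m := fun m => hmono.le_apply
    have hTle : ∀ m, T m ≤ N (m+1) := fun m => by rw [hNsucc]; exact le_max_right _ _
    refine ⟨{n | ∀ m, N (m+1) ≤ n → a n < 1/((m:ℝ)+1)}, ?_, ?_⟩
    · rw [KVN.fullDensity_iff, NormedAddCommGroup.tendsto_nhds_zero]
      intro ε hε
      obtain ⟨m₀, hm₀⟩ := exists_nat_one_div_lt hε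
      rw [eventually_atTop]
      refine ⟨N (m₀+1), fun n hn => ?_⟩
      have hn0 : 0 < n :=
        lt_of_lt_of_le (lt_of_lt_of_le (Nat.succ_pos m₀) (hle (m₀+1))) hn
      set m := Nat.findGreatest (fun i => N (i+1) ≤ n) n with hm
      have hm₀n : m₀ ≤ n := le_trans (le_trans (Nat.le_succ m₀) (hle (m₀+1))) hn
      have hm₀m : m₀ ≤ m := Nat.le_findGreatest hm₀n hn
      have hNm : N (m+1) ≤ n := Nat.findGreatest_spec (P := fun i => N (i+1) ≤ n) (m := m₀) hm₀n hn
      have hsub : KVN.cnt {n | ∀ m, N (m+1) ≤ n → a n < 1/((m:ℝ)+1)}ᶜ n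
          ≤ KVN.cnt {k | 1/((m:ℝ)+1) ≤ a k} n := by
        apply KVN.cnt_mono
        intro k hkn hkc
        rw [Set.mem_compl_iff] at hkc
        simp only [Set.mem_setOf_eq, not_forall, not_lt] at hkc
        obtain ⟨m', hm'1, hm'2⟩ := hkc
        have hm'le : m' ≤ m := by
          by_contra hc
          push_neg at hc
          have hm'n : m' ≤ n :=
            le_trans (le_trans (Nat.le_succ m') (hle (m'+1))) (le_trans hm'1 hkn.le)
          exact Nat.findGreatest_is_greatest hc hm'n (le_trans hm'1 hkn.le)
        show (1:ℝ)/((m:ℝ)+1) ≤ a k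
        calc (1:ℝ)/((m:ℝ)+1) ≤ 1/((m':ℝ)+1) := by
              apply one_div_le_one_div_of_le (by positivity)
              have : (m' : ℝ) ≤ m := by exact_mod_cast hm'le
              linarith
          _ ≤ a k := hm'2
      have hbound := hT m n (le_trans (hTle m) hNm)
      have hdiv : (KVN.cnt {n | ∀ m, N (m+1) ≤ n → a n < 1/((m:ℝ)+1)}ᶜ n : ℝ)/n
          ≤ (KVN.cnt {k | 1/((m:ℝ)+1) ≤ a k} n : ℝ)/n :=
        div_le_div_of_nonneg_right (by exact_mod_cast hsub) (Nat.cast_nonneg n)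
      have h1 : (1:ℝ)/((m:ℝ)+1) ≤ 1/((m₀:ℝ)+1) := by
        apply one_div_le_one_div_of_le (by positivity)
        have : (m₀ : ℝ) ≤ m := by exact_mod_cast hm₀m
        linarith
      rw [Real.norm_eq_abs, abs_of_nonneg (by positivity)]
      linarith
    · rw [NormedAddCommGroup.tendsto_nhds_zero]
      intro ε hε
      obtain ⟨m₀, hm₀⟩ := exists_nat_one_div_lt hε
      rw [eventually_inf_principal]
      filter_upwards [eventually_ge_atTop (N (m₀+1))] with n hn hnJ
      have := hnJ m₀ hn
      rw [Real.norm_eq_abs, abs_of_nonneg (hnn n)]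
      linarith
  · rintro ⟨J, hJd, hJt⟩
    rw [KVN.fullDensity_iff] at hJd
    rw [NormedAddCommGroup.tendsto_nhds_zero] at hJt ⊢
    intro ε hε
    set D := max C 1 with hD
    have hD0 : (0:ℝ) < D := lt_of_lt_of_le one_pos (le_max_right _ _)
    have hε3 : 0 < ε/3 := by positivity
    obtain ⟨M, hM⟩ : ∃ M, ∀ n ≥ M, n ∈ J → ‖a n‖ < ε/3 := by
      have h1 := hJt (ε/3) hε3
      rw [eventually_inf_principal, eventually_atTop] at h1
      exact h1
    have hS0 : Tendsto (fun n : ℕ => (∑ k ∈ Finset.range M, a k) / n) atTop (nhds 0) :=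
      tendsto_const_nhds.div_atTop tendsto_natCast_atTop_atTop
    have hcompl : Tendsto (fun n : ℕ => D * ((KVN.cnt Jᶜ n : ℝ)/n)) atTop (nhds 0) := by
      have := hJd.const_mul D
      simpa using this
    filter_upwards [hS0.eventually_lt_const hε3, hcompl.eventually_lt_const hε3,
      eventually_gt_atTop 0, eventually_ge_atTop M] with n h1 h2 hn0 hnM
    have hnR : (0:ℝ) < n := by exact_mod_cast hn0
    -- main sum estimate
    have hsum : ∑ k ∈ Finset.range n, a k
        ≤ (∑ k ∈ Finset.range M, a k) + (ε/3)*n + D * (KVN.cnt Jᶜ n) := by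
      have hsplit : ∑ k ∈ Finset.range n, a k
          = (∑ k ∈ Finset.range M, a k) + ∑ k ∈ Finset.Ico M n, a k := by
        rw [Finset.range_eq_Ico, Finset.range_eq_Ico]
        exact (Finset.sum_Ico_consecutive a (Nat.zero_le M) hnM).symm
      rw [hsplit]
      have hsplit2 : ∑ k ∈ Finset.Ico M n, a k
          = (∑ k ∈ (Finset.Ico M n).filter (fun k => k ∈ J), a k)
            + ∑ k ∈ (Finset.Ico M n).filter (fun k => ¬ k ∈ J), a k :=
        (Finset.sum_filter_add_sum_filter_not _ _ _).symm
      have hJpart : ∑ k ∈ (Finset.Ico M n).filter (fun k => k ∈ J), a k ≤ (ε/3)*n := by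
        calc ∑ k ∈ (Finset.Ico M n).filter (fun k => k ∈ J), a k
            ≤ ((Finset.Ico M n).filter (fun k => k ∈ J)).card • (ε/3) := by
              apply Finset.sum_le_card_nsmul
              intro x hx
              rw [Finset.mem_filter, Finset.mem_Ico] at hx
              have := hM x hx.1.1 hx.2
              rw [Real.norm_eq_abs, abs_of_nonneg (hnn x)] at this
              linarith
          _ ≤ n • (ε/3) := by
              apply nsmul_le_nsmul_left hε3.le
              calc ((Finset.Ico M n).filter (fun k => k ∈ J)).card
                  ≤ (Finset.Ico M n).card := Finset.card_filter_le _ _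
                _ ≤ n := by rw [Nat.card_Ico]; omega
          _ = (ε/3)*n := by rw [nsmul_eq_mul]; ring
      have hJcpart : ∑ k ∈ (Finset.Ico M n).filter (fun k => ¬ k ∈ J), a k
          ≤ D * (KVN.cnt Jᶜ n) :=
        KVN.sum_notmem_le a hD0.le (fun x => le_trans (hC x) (le_max_left _ _)) J M n
      linarith
    have hfin : (∑ k ∈ Finset.range n, a k) / n
        ≤ (∑ k ∈ Finset.range M, a k)/n + ε/3 + D * ((KVN.cnt Jᶜ n : ℝ)/n) := by
      have := div_le_div_of_nonneg_right hsum hnR.le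
      calc (∑ k ∈ Finset.range n, a k) / n
          ≤ ((∑ k ∈ Finset.range M, a k) + (ε/3)*n + D * (KVN.cnt Jᶜ n))/n := this
        _ = (∑ k ∈ Finset.range M, a k)/n + ε/3 + D * ((KVN.cnt Jᶜ n : ℝ)/n) := by
            field_simp
    have hsnn : (0:ℝ) ≤ (∑ k ∈ Finset.range n, a k) / n := by
      apply div_nonneg _ hnR.le
      exact Finset.sum_nonneg (fun i _ => hnn i)
    rw [Real.norm_eq_abs, abs_of_nonneg hsnn]
    linarith
end
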